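/- Let A be an m × n real matrix with K = {x : Ax ≤ 0}, and y ∈ ℝⁿ. If λ̂ ∈ ℝᵐ minimizes ‖y - Aᵀλ‖² over λ ≥ 0, then x̂ = y - Aᵀλ̂ is the projection of y onto K (Kuhn–Tucker duality for cone projection). -/

import Mathlib

open Matrix
open scoped RealInnerProductSpace

/-- Interpret a plain vector `Fin n → ℝ` as a point of Euclidean space. -/
noncomputable def toE {n : ℕ} (v : Fin n → ℝ) : EuclideanSpace ℝ (Fin n) :=
  (WithLp.equiv 2 ((i : Fin n) → ℝ)).symm v

lemma toE_add {n : ℕ} (u v : Fin n → ℝ) : toE (u + v) = toE u + toE v := rfl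

lemma toE_smul {n : ℕ} (t : ℝ) (v : Fin n → ℝ) : toE (t • v) = t • toE v := rfl

lemma toE_neg {n : ℕ} (v : Fin n → ℝ) : toE (-v) = - toE v := rfl

lemma aux_nonpos (c s : ℝ) (h : ∀ t : ℝ, 0 < t → t ≤ 1 → 2*(t*c) ≤ t^2*s) :
    c ≤ 0 := by
  by_contra hc
  push_neg at hc
  rcases le_or_gt s 0 with hs | hs
  · have := h 1 one_pos le_rfl; nlinarith
  · set t := min 1 (c/s) with ht
    have ht0 : 0 < t := lt_min one_pos (div_pos hc hs)
    have ht1 : t ≤ 1 := min_le_left _ _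
    have h2 := h t ht0 ht1
    have hts : t ≤ c/s := min_le_right _ _
    have : t * s ≤ c := by
      rw [← div_mul_cancel₀ c (ne_of_gt hs)]
      exact mul_le_mul_of_nonneg_right hts hs.le
    nlinarith

lemma inner_toE {m n : ℕ} (A : Matrix (Fin m) (Fin n) ℝ)
    (w : EuclideanSpace ℝ (Fin n)) (d : Fin m → ℝ) :
    ⟪w, toE (Aᵀ.mulVec d)⟫ = ∑ i, d i * A.mulVec w i := by
  simp only [toE, PiLp.inner_apply, RCLike.inner_apply, starRingEnd_apply, star_trivial,
    WithLp.equiv_symm_apply, PiLp.toLp_apply, WithLp.ofLp_toLp, mulVec, dotProduct, transpose_apply, Finset.mul_sum,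
    Finset.sum_mul]
  rw [Finset.sum_comm]
  apply Finset.sum_congr rfl
  intro i _
  apply Finset.sum_congr rfl
  intro j _
  ring

/-- Kuhn–Tucker duality for cone projection: if `λ̂ ≥ 0` minimizes
`‖y - Aᵀλ‖²` over `λ ≥ 0`, then `x̂ = y - Aᵀλ̂` is the projection of `y` onto
`K = {x | Ax ≤ 0}`. -/
theorem dual_min_gives_projection (m n : ℕ) (A : Matrix (Fin m) (Fin n) ℝ)
    (y : EuclideanSpace ℝ (Fin n)) (lamhat : Fin m → ℝ)
    (hpos : ∀ i, 0 ≤ lamhat i)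
    (hmin : ∀ lam : Fin m → ℝ, (∀ i, 0 ≤ lam i) →
      ‖y - toE (Aᵀ.mulVec lamhat)‖ ^ 2 ≤ ‖y - toE (Aᵀ.mulVec lam)‖ ^ 2) :
    y - toE (Aᵀ.mulVec lamhat) ∈
        {x : EuclideanSpace ℝ (Fin n) | ∀ i, A.mulVec x i ≤ 0} ∧
      ∀ z ∈ {x : EuclideanSpace ℝ (Fin n) | ∀ i, A.mulVec x i ≤ 0},
        ‖(y - toE (Aᵀ.mulVec lamhat)) - y‖ ≤ ‖z - y‖ := by
  set x : EuclideanSpace ℝ (Fin n) := y - toE (Aᵀ.mulVec lamhat) with hx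
  -- directional first-order condition
  have key : ∀ d : Fin m → ℝ, (∀ t : ℝ, 0 < t → t ≤ 1 → ∀ i, 0 ≤ lamhat i + t * d i) →
      ⟪x, toE (Aᵀ.mulVec d)⟫ ≤ 0 := by
    intro d hfeas
    apply aux_nonpos _ (‖toE (Aᵀ.mulVec d)‖^2)
    intro t ht0 ht1
    have h1 := hmin (lamhat + t • d) (fun i => by simpa using hfeas t ht0 ht1 i)
    have h2 : y - toE (Aᵀ.mulVec (lamhat + t • d)) = x - t • toE (Aᵀ.mulVec d) := by
      rw [mulVec_add, mulVec_smul, toE_add, toE_smul, hx]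
      abel
    have h3 : ‖x - t • toE (Aᵀ.mulVec d)‖^2
        = ‖x‖^2 - 2 * (t * ⟪x, toE (Aᵀ.mulVec d)⟫) + t^2 * ‖toE (Aᵀ.mulVec d)‖^2 := by
      rw [norm_sub_sq_real, real_inner_smul_right, norm_smul]
      rw [mul_pow]
      simp [abs_of_pos ht0]
      try ring
    rw [h2, h3] at h1
    linarith
  -- feasibility
  have hfeasx : ∀ i, A.mulVec x i ≤ 0 := by
    intro i
    have h := key (Pi.single i 1) (fun t ht0 _ j => by
      rcases eq_or_ne j i with rfl | hj
      · simp [Pi.single_apply]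
        linarith [hpos j]
      · simp [Pi.single_apply, hj, hpos j])
    rw [inner_toE] at h
    simpa [Pi.single_apply, Finset.sum_ite_eq'] using h
  -- complementary slackness
  have hcs : ⟪x, toE (Aᵀ.mulVec lamhat)⟫ = 0 := by
    have hge : 0 ≤ ⟪x, toE (Aᵀ.mulVec lamhat)⟫ := by
      have h := key (-lamhat) (fun t ht0 ht1 i => by
        have : lamhat i + t * (-lamhat i) = (1 - t) * lamhat i := by ring
        rw [Pi.neg_apply, this]
        exact mul_nonneg (by linarith) (hpos i))
      rw [show Aᵀ.mulVec (-lamhat) = -(Aᵀ.mulVec lamhat) by simp [Matrix.mulVec_neg],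
        toE_neg, inner_neg_right] at h
      linarith
    have hle : ⟪x, toE (Aᵀ.mulVec lamhat)⟫ ≤ 0 := by
      rw [inner_toE]
      exact Finset.sum_nonpos fun i _ => mul_nonpos_of_nonneg_of_nonpos (hpos i) (hfeasx i)
    linarith
  refine ⟨hfeasx, ?_⟩
  intro z hz
  have hzx : ⟪z - x, toE (Aᵀ.mulVec lamhat)⟫ ≤ 0 := by
    rw [inner_sub_left, hcs, sub_zero, inner_toE]
    exact Finset.sum_nonpos fun i _ => mul_nonpos_of_nonneg_of_nonpos (hpos i) (hz i)
  have hsq : ‖x - y‖^2 ≤ ‖z - y‖^2 := by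
    have hzy : z - y = (z - x) - toE (Aᵀ.mulVec lamhat) := by
      rw [hx]; abel
    have hxy : x - y = -(toE (Aᵀ.mulVec lamhat)) := by
      rw [hx]; abel
    rw [hzy, hxy, norm_neg, norm_sub_sq_real]
    nlinarith [sq_nonneg ‖z - x‖]
  have := Real.sqrt_le_sqrt hsq
  rwa [Real.sqrt_sq (norm_nonneg _), Real.sqrt_sq (norm_nonneg _)] at this
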